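/- For every integer m ≥ 2 there exists a function g : ℝ → ℝ such that: g ≥ 0 everywhere; supp(g) ⊆ [0,1]; ∫₀¹ g(x) dx = 1; g is m times continuously differentiable; and there is an absolute constant A such that for all k ≤ m and all x, |g^{(k)}(x)| ≤ A (2m)^{k+1}. -/

import Mathlib

open MeasureTheory intervalIntegral

/-- Iterated averaging operator: `bumpSeq N 0 = N · 1_{(0,1/N]}` and
`bumpSeq N (j+1) x = N ∫_{x-1/N}^{x} bumpSeq N j`. -/
noncomputable def bumpSeq (N : ℕ) : ℕ → ℝ → ℝ
  | 0 => Set.indicator (Set.Ioc (0:ℝ) ((N:ℝ)⁻¹)) (fun _ => (N:ℝ))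
  | (j+1) => fun x => (N:ℝ) * ∫ t in (x - (N:ℝ)⁻¹)..x, bumpSeq N j t

lemma bumpSeq_nonneg (N : ℕ) : ∀ j x, 0 ≤ bumpSeq N j x := by
  intro j
  induction j with
  | zero =>
    intro x
    exact Set.indicator_nonneg (fun _ _ => by positivity) x
  | succ j ih =>
    intro x
    have hx : x - (N:ℝ)⁻¹ ≤ x := by
      have : (0:ℝ) ≤ (N:ℝ)⁻¹ := by positivity
      linarith
    have h := intervalIntegral.integral_nonneg (μ := volume) hx (fun t _ => ih t)
    have : (0:ℝ) ≤ (N:ℝ) := by positivity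
    exact mul_nonneg this h

lemma bumpSeq_intCont (N : ℕ) :
    ∀ j, (∀ a b, IntervalIntegrable (bumpSeq N j) volume a b) ∧
      (0 < j → Continuous (bumpSeq N j)) := by
  intro j
  induction j with
  | zero =>
    refine ⟨fun a b => ?_, by simp⟩
    have h0 : Integrable (bumpSeq N 0) volume := by
      show Integrable (Set.indicator _ _) volume
      rw [integrable_indicator_iff measurableSet_Ioc]
      exact integrableOn_const measure_Ioc_lt_top.ne
    exact h0.intervalIntegrable
  | succ j ih =>
    have hrw : bumpSeq N (j+1) = fun x => (N:ℝ) *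
        ((∫ t in (0:ℝ)..x, bumpSeq N j t) - ∫ t in (0:ℝ)..(x - (N:ℝ)⁻¹), bumpSeq N j t) := by
      funext x
      show (N:ℝ) * (∫ t in (x - (N:ℝ)⁻¹)..x, bumpSeq N j t) = _
      rw [intervalIntegral.integral_interval_sub_left (ih.1 0 x) (ih.1 0 (x - (N:ℝ)⁻¹))]
    have hF : Continuous fun u => ∫ t in (0:ℝ)..u, bumpSeq N j t :=
      intervalIntegral.continuous_primitive ih.1 0
    have hcont : Continuous (bumpSeq N (j+1)) := by
      rw [hrw]
      exact continuous_const.mul (hF.sub (hF.comp (continuous_id.sub continuous_const)))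
    exact ⟨fun a b => hcont.intervalIntegrable a b, fun _ => hcont⟩

lemma bumpSeq_le (N : ℕ) (hN : 0 < N) : ∀ j x, bumpSeq N j x ≤ (N:ℝ) := by
  intro j
  induction j with
  | zero =>
    intro x
    show Set.indicator _ _ x ≤ (N:ℝ)
    rw [Set.indicator_apply]
    split_ifs
    · exact le_rfl
    · positivity
  | succ j ih =>
    intro x
    have hNpos : (0:ℝ) < (N:ℝ) := by exact_mod_cast hN
    have hδ : (0:ℝ) < (N:ℝ)⁻¹ := by positivity
    have hx : x - (N:ℝ)⁻¹ ≤ x := by linarith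
    have h1 : (∫ t in (x - (N:ℝ)⁻¹)..x, bumpSeq N j t) ≤ ∫ t in (x - (N:ℝ)⁻¹)..x, (N:ℝ) :=
      intervalIntegral.integral_mono_on hx ((bumpSeq_intCont N j).1 _ _)
        intervalIntegrable_const (fun t _ => ih t)
    have h2 : (∫ t in (x - (N:ℝ)⁻¹)..x, (N:ℝ)) = (N:ℝ)⁻¹ * (N:ℝ) := by
      rw [intervalIntegral.integral_const, smul_eq_mul]
      ring_nf
    show (N:ℝ) * (∫ t in (x - (N:ℝ)⁻¹)..x, bumpSeq N j t) ≤ (N:ℝ)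
    calc (N:ℝ) * (∫ t in (x - (N:ℝ)⁻¹)..x, bumpSeq N j t)
        ≤ (N:ℝ) * ((N:ℝ)⁻¹ * (N:ℝ)) := by
          apply mul_le_mul_of_nonneg_left _ hNpos.le
          rw [← h2]; exact h1
      _ = (N:ℝ) := by field_simp

lemma bumpSeq_succ_eq (N : ℕ) (j : ℕ) :
    bumpSeq N (j+1) = fun x => (N:ℝ) *
      ((∫ t in (0:ℝ)..x, bumpSeq N j t) - ∫ t in (0:ℝ)..(x - (N:ℝ)⁻¹), bumpSeq N j t) := by
  funext x
  show (N:ℝ) * (∫ t in (x - (N:ℝ)⁻¹)..x, bumpSeq N j t) = _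
  rw [intervalIntegral.integral_interval_sub_left ((bumpSeq_intCont N j).1 0 x)
    ((bumpSeq_intCont N j).1 0 (x - (N:ℝ)⁻¹))]

lemma bumpSeq_hasDerivAt (N : ℕ) (j : ℕ) (hc : Continuous (bumpSeq N j)) (x : ℝ) :
    HasDerivAt (bumpSeq N (j+1))
      ((N:ℝ) * (bumpSeq N j x - bumpSeq N j (x - (N:ℝ)⁻¹))) x := by
  rw [bumpSeq_succ_eq N j]
  have h1 : HasDerivAt (fun u => ∫ t in (0:ℝ)..u, bumpSeq N j t) (bumpSeq N j x) x :=
    (hc.integral_hasStrictDerivAt 0 x).hasDerivAt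
  have h2 : HasDerivAt (fun y : ℝ => ∫ t in (0:ℝ)..(y - (N:ℝ)⁻¹), bumpSeq N j t)
      (bumpSeq N j (x - (N:ℝ)⁻¹)) x :=
    HasDerivAt.comp_sub_const x _ (hc.integral_hasStrictDerivAt 0 (x - (N:ℝ)⁻¹)).hasDerivAt
  exact (h1.sub h2).const_mul _

lemma bumpSeq_deriv (N : ℕ) (j : ℕ) (hc : Continuous (bumpSeq N j)) :
    deriv (bumpSeq N (j+1)) =
      fun x => (N:ℝ) * (bumpSeq N j x - bumpSeq N j (x - (N:ℝ)⁻¹)) :=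
  funext fun x => (bumpSeq_hasDerivAt N j hc x).deriv

lemma bumpSeq_contDiff (N : ℕ) : ∀ k j : ℕ, ContDiff ℝ k (bumpSeq N (k + j + 1)) := by
  intro k
  induction k with
  | zero =>
    intro j
    rw [Nat.zero_add]
    simp only [Nat.cast_zero]
    exact contDiff_zero.mpr ((bumpSeq_intCont N (j+1)).2 j.succ_pos)
  | succ k ih =>
    intro j
    have hc : Continuous (bumpSeq N (k + j + 1)) := (bumpSeq_intCont N _).2 (Nat.succ_pos _)
    rw [show k + 1 + j + 1 = (k + j + 1) + 1 from by omega]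
    have hcast : ((k + 1 : ℕ) : WithTop ℕ∞) = (k : ℕ) + 1 := by push_cast; ring
    rw [hcast]
    refine contDiff_succ_iff_deriv.mpr ⟨fun x => (bumpSeq_hasDerivAt N _ hc x).differentiableAt,
      by simp, ?_⟩
    rw [bumpSeq_deriv N _ hc]
    have h1 := ih j
    have h2 : ContDiff ℝ k fun y : ℝ => bumpSeq N (k + j + 1) (y - (N:ℝ)⁻¹) :=
      h1.comp (contDiff_id.sub contDiff_const)
    exact contDiff_const.mul (h1.sub h2)

lemma iteratedDeriv_comb {k : ℕ} {f : ℝ → ℝ} (hf : ContDiff ℝ k f) (c d : ℝ) (x : ℝ) :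
    iteratedDeriv k (fun y => c * (f y - f (y - d))) x
      = c * (iteratedDeriv k f x - iteratedDeriv k f (x - d)) := by
  have hg : ContDiff ℝ k (fun y => f (y - d)) := hf.comp (contDiff_id.sub contDiff_const)
  have h2 : iteratedDeriv k (fun y => f (y - d)) x = iteratedDeriv k f (x - d) := by
    have h := iteratedDeriv_comp_add_const k f (-d)
    have := congrFun h x
    simpa [sub_eq_add_neg] using this
  have h1 : iteratedDeriv k (fun y => f y - f (y - d)) x
      = iteratedDeriv k f x - iteratedDeriv k (fun y => f (y - d)) x := by
    have h := iteratedDerivWithin_sub (Set.mem_univ x) uniqueDiffOn_univ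
      hf.contDiffWithinAt hg.contDiffWithinAt
    simpa [iteratedDerivWithin_univ, Pi.sub_def] using h
  have h0 : iteratedDeriv k (fun y => c * (f y - f (y - d))) x
      = c * iteratedDeriv k (fun y => f y - f (y - d)) x := by
    have h := iteratedDerivWithin_const_mul (Set.mem_univ x) uniqueDiffOn_univ c
      ((hf.sub hg).contDiffWithinAt)
    simpa [iteratedDerivWithin_univ] using h
  rw [h0, h1, h2]

lemma bumpSeq_iteratedDeriv_bound (N : ℕ) (hN : 0 < N) :
    ∀ (k j : ℕ) (x : ℝ),
      |iteratedDeriv k (bumpSeq N (k + j + 1)) x| ≤ (N:ℝ) * (2 * N) ^ k := by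
  intro k
  induction k with
  | zero =>
    intro j x
    rw [Nat.zero_add]
    simp only [iteratedDeriv_zero, pow_zero, mul_one]
    rw [abs_of_nonneg (bumpSeq_nonneg N _ x)]
    exact bumpSeq_le N hN _ x
  | succ k ih =>
    intro j x
    have hc : Continuous (bumpSeq N (k + j + 1)) := (bumpSeq_intCont N _).2 (Nat.succ_pos _)
    rw [show k + 1 + j + 1 = (k + j + 1) + 1 from by omega, iteratedDeriv_succ',
      bumpSeq_deriv N _ hc]
    rw [iteratedDeriv_comb (bumpSeq_contDiff N k j) ((N:ℝ)) ((N:ℝ)⁻¹) x]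
    have b1 := ih j x
    have b2 := ih j (x - (N:ℝ)⁻¹)
    have hNpos : (0:ℝ) < (N:ℝ) := by exact_mod_cast hN
    calc |(N:ℝ) * (iteratedDeriv k (bumpSeq N (k+j+1)) x
            - iteratedDeriv k (bumpSeq N (k+j+1)) (x - (N:ℝ)⁻¹))|
        = (N:ℝ) * |iteratedDeriv k (bumpSeq N (k+j+1)) x
            - iteratedDeriv k (bumpSeq N (k+j+1)) (x - (N:ℝ)⁻¹)| := by
          rw [abs_mul, abs_of_nonneg hNpos.le]
      _ ≤ (N:ℝ) * (|iteratedDeriv k (bumpSeq N (k+j+1)) x|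
            + |iteratedDeriv k (bumpSeq N (k+j+1)) (x - (N:ℝ)⁻¹)|) := by
          exact mul_le_mul_of_nonneg_left (abs_sub _ _) hNpos.le
      _ ≤ (N:ℝ) * ((N:ℝ) * (2*N)^k + (N:ℝ) * (2*N)^k) := by
          apply mul_le_mul_of_nonneg_left _ hNpos.le
          exact add_le_add b1 b2
      _ = (N:ℝ) * (2*N)^(k+1) := by ring

lemma bumpSeq_eq_zero (N : ℕ) (hN : 0 < N) :
    ∀ (j : ℕ) (x : ℝ), x ∉ Set.Ioc (0:ℝ) (((j:ℝ) + 1) * (N:ℝ)⁻¹) → bumpSeq N j x = 0 := by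
  have hNpos : (0:ℝ) < (N:ℝ) := by exact_mod_cast hN
  have hδ : (0:ℝ) < (N:ℝ)⁻¹ := by positivity
  intro j
  induction j with
  | zero =>
    intro x hx
    apply Set.indicator_of_notMem
    simpa using hx
  | succ j ih =>
    intro x hx
    show (N:ℝ) * (∫ t in (x - (N:ℝ)⁻¹)..x, bumpSeq N j t) = 0
    rw [intervalIntegral.integral_zero_ae, mul_zero]
    refine Filter.Eventually.of_forall fun t ht => ?_
    rw [Set.uIoc_of_le (by linarith : x - (N:ℝ)⁻¹ ≤ x)] at ht
    apply ih
    rw [Set.mem_Ioc] at hx ⊢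
    push_neg at hx ⊢
    push_cast at hx
    rcases lt_or_ge 0 x with hx0 | hx0
    · -- x > ((j+2)) δ, so t > x - δ ≥ (j+1) δ
      intro ht0
      have hx2 := hx hx0
      have h1 : ((j:ℝ) + 1) * (N:ℝ)⁻¹ < x - (N:ℝ)⁻¹ := by nlinarith
      linarith [ht.1]
    · -- x ≤ 0 so t ≤ 0
      intro ht0
      exfalso
      have : t ≤ x := ht.2
      linarith

lemma bumpSeq_integral_succ (N : ℕ) (hN : 0 < N) (j : ℕ)
    (h : ((j:ℝ) + 2) * (N:ℝ)⁻¹ ≤ 1) :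
    (∫ x in (0:ℝ)..1, bumpSeq N (j+1) x) = ∫ x in (0:ℝ)..1, bumpSeq N j x := by
  have hNpos : (0:ℝ) < (N:ℝ) := by exact_mod_cast hN
  have hδ : (0:ℝ) < (N:ℝ)⁻¹ := by positivity
  set δ := (N:ℝ)⁻¹ with hδdef
  have hib := (bumpSeq_intCont N j).1
  set F := fun u : ℝ => ∫ t in (0:ℝ)..u, bumpSeq N j t with hFdef
  have hFc : Continuous F := intervalIntegral.continuous_primitive hib 0
  have hFi : ∀ a b : ℝ, IntervalIntegrable F volume a b :=
    fun a b => hFc.intervalIntegrable a b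
  have hGc : Continuous fun x : ℝ => F (x - δ) :=
    hFc.comp (continuous_id.sub continuous_const)
  have hrw2 : bumpSeq N (j+1) = fun x => (N:ℝ) * (F x - F (x - δ)) := by
    simp only [hFdef]
    exact bumpSeq_succ_eq N j
  rw [hrw2]
  rw [intervalIntegral.integral_const_mul]
  rw [intervalIntegral.integral_sub (hFi 0 1) (hGc.intervalIntegrable 0 1)]
  have hshift : (∫ x in (0:ℝ)..1, F (x - δ)) = ∫ x in (0-δ)..(1-δ), F x :=
    intervalIntegral.integral_comp_sub_right F δ
  have h1 : (∫ x in (0-δ)..(1-δ), F x) + (∫ x in (1-δ)..(1:ℝ), F x)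
      = ∫ x in (0-δ)..(1:ℝ), F x :=
    intervalIntegral.integral_add_adjacent_intervals (hFi _ _) (hFi _ _)
  have h2 : (∫ x in (0-δ)..(0:ℝ), F x) + (∫ x in (0:ℝ)..1, F x)
      = ∫ x in (0-δ)..(1:ℝ), F x :=
    intervalIntegral.integral_add_adjacent_intervals (hFi _ _) (hFi _ _)
  have hF0 : Set.EqOn F (fun _ => (0:ℝ)) (Set.uIcc (0-δ) (0:ℝ)) := by
    intro y hy
    rw [Set.uIcc_of_le (by linarith)] at hy
    have hy0 : y ≤ 0 := hy.2
    show (∫ t in (0:ℝ)..y, bumpSeq N j t) = 0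
    rw [intervalIntegral.integral_symm]
    rw [intervalIntegral.integral_zero_ae, neg_zero]
    refine Filter.Eventually.of_forall fun t ht => ?_
    rw [Set.uIoc_of_le hy0] at ht
    apply bumpSeq_eq_zero N hN j
    rw [Set.mem_Ioc]
    push_neg
    intro ht0
    exfalso
    linarith [ht.2]
  have e3 : (∫ x in (0-δ)..(0:ℝ), F x) = 0 := by
    rw [intervalIntegral.integral_congr hF0]
    simp
  have hFT : Set.EqOn F (fun _ => F 1) (Set.uIcc (1-δ) (1:ℝ)) := by
    intro y hy
    rw [Set.uIcc_of_le (by linarith)] at hy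
    have hy1 : 1 - δ ≤ y := hy.1
    have hy2 : y ≤ 1 := hy.2
    have hsub : F 1 - F y = ∫ t in y..1, bumpSeq N j t :=
      intervalIntegral.integral_interval_sub_left (hib 0 1) (hib 0 y)
    have hz : (∫ t in y..1, bumpSeq N j t) = 0 := by
      rw [intervalIntegral.integral_zero_ae]
      refine Filter.Eventually.of_forall fun t ht => ?_
      rw [Set.uIoc_of_le hy2] at ht
      apply bumpSeq_eq_zero N hN j
      rw [Set.mem_Ioc]
      push_neg
      intro ht0
      have hj1 : ((j:ℝ) + 1) * δ ≤ 1 - δ := by nlinarith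
      linarith [ht.1]
    have : F 1 - F y = 0 := by rw [hsub, hz]
    linarith
  have e4 : (∫ x in (1-δ)..(1:ℝ), F x) = δ * F 1 := by
    rw [intervalIntegral.integral_congr hFT, intervalIntegral.integral_const, smul_eq_mul]
    ring
  have key : (∫ x in (0:ℝ)..1, F x) - (∫ x in (0-δ)..(1-δ), F x) = δ * F 1 := by
    linarith
  rw [hshift, key]
  show (N:ℝ) * (δ * F 1) = F 1
  rw [hδdef, ← mul_assoc, mul_inv_cancel₀ (ne_of_gt hNpos), one_mul]

lemma bumpSeq_integral (N : ℕ) (hN : 0 < N) :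
    ∀ j : ℕ, ((j:ℝ) + 1) * (N:ℝ)⁻¹ ≤ 1 → (∫ x in (0:ℝ)..1, bumpSeq N j x) = 1 := by
  have hNpos : (0:ℝ) < (N:ℝ) := by exact_mod_cast hN
  have hδ : (0:ℝ) < (N:ℝ)⁻¹ := by positivity
  intro j
  induction j with
  | zero =>
    intro h1
    have hδ1 : (N:ℝ)⁻¹ ≤ 1 := by
      have := h1
      push_cast at this
      linarith
    have hsplit := intervalIntegral.integral_add_adjacent_intervals
      ((bumpSeq_intCont N 0).1 0 ((N:ℝ)⁻¹)) ((bumpSeq_intCont N 0).1 ((N:ℝ)⁻¹) 1)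
    have e1 : (∫ x in (0:ℝ)..((N:ℝ)⁻¹), bumpSeq N 0 x) = ∫ x in (0:ℝ)..((N:ℝ)⁻¹), (N:ℝ) := by
      apply intervalIntegral.integral_congr_ae
      refine Filter.Eventually.of_forall fun t ht => ?_
      rw [Set.uIoc_of_le hδ.le] at ht
      exact Set.indicator_of_mem ht _
    have e2 : (∫ x in ((N:ℝ)⁻¹)..1, bumpSeq N 0 x) = 0 := by
      rw [intervalIntegral.integral_zero_ae]
      refine Filter.Eventually.of_forall fun t ht => ?_
      rw [Set.uIoc_of_le hδ1] at ht
      apply Set.indicator_of_notMem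
      rw [Set.mem_Ioc]
      push_neg
      intro
      linarith [ht.1]
    rw [← hsplit, e1, e2, intervalIntegral.integral_const, smul_eq_mul, add_zero, sub_zero,
      inv_mul_cancel₀ (ne_of_gt hNpos)]
  | succ j ih =>
    intro h
    push_cast at h
    rw [bumpSeq_integral_succ N hN j (by linarith)]
    apply ih
    have : (0:ℝ) ≤ (N:ℝ)⁻¹ := hδ.le
    nlinarith

/-- For every integer `m ≥ 2` there is a nonnegative bump `g` supported in `[0,1]`, with
`∫₀¹ g = 1`, `m` times continuously differentiable, and `|g^{(k)}| ≤ A (2m)^{k+1}` for all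
`k ≤ m`, with `A` an absolute constant. -/
theorem exists_bump_function :
    ∃ A : ℝ, 0 < A ∧ ∀ m : ℕ, 2 ≤ m →
      ∃ g : ℝ → ℝ,
        (∀ x, 0 ≤ g x) ∧
        Function.support g ⊆ Set.Icc 0 1 ∧
        (∫ x in (0 : ℝ)..1, g x) = 1 ∧
        ContDiff ℝ m g ∧
        ∀ k ≤ m, ∀ x : ℝ, |iteratedDeriv k g x| ≤ A * (2 * (m : ℝ)) ^ (k + 1) := by
  refine ⟨21, by norm_num, fun m hm => ?_⟩
  have hN : 0 < m + 2 := by omega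
  have hNR : ((m+2:ℕ):ℝ) = (m:ℝ) + 2 := by push_cast; ring
  have hNpos : (0:ℝ) < ((m+2:ℕ):ℝ) := by exact_mod_cast hN
  refine ⟨bumpSeq (m+2) (m+1), fun x => bumpSeq_nonneg (m+2) (m+1) x, ?_, ?_, ?_, ?_⟩
  · -- support
    intro x hx
    by_contra hxc
    apply hx
    apply bumpSeq_eq_zero (m+2) hN (m+1)
    intro hmem
    apply hxc
    have h1 : (((m+1:ℕ):ℝ) + 1) * (((m+2:ℕ):ℝ))⁻¹ = 1 := by
      push_cast
      rw [show ((m:ℝ) + 1 + 1) = (m:ℝ) + 2 from by ring]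
      field_simp
    rw [h1] at hmem
    exact ⟨hmem.1.le, hmem.2⟩
  · -- integral
    apply bumpSeq_integral (m+2) hN (m+1)
    push_cast
    rw [show ((m:ℝ) + 1 + 1) = (m:ℝ) + 2 from by ring]
    rw [mul_inv_cancel₀ (by positivity : (m:ℝ) + 2 ≠ 0)]
  · -- smoothness
    have h := bumpSeq_contDiff (m+2) m 0
    simpa using h
  · -- derivative bounds
    intro k hk x
    have hb := bumpSeq_iteratedDeriv_bound (m+2) hN k (m - k) x
    rw [show k + (m - k) + 1 = m + 1 from by omega] at hb
    refine hb.trans ?_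
    -- numeric: (m+2) * (2*(m+2))^k ≤ 21 * (2*m)^(k+1)
    rw [hNR]
    set M : ℝ := (m:ℝ) with hM
    have hM2 : (2:ℝ) ≤ M := by show (2:ℝ) ≤ (m:ℝ); exact_mod_cast hm
    have hMpos : (0:ℝ) < M := by linarith
    have h1 : M + 2 ≤ M * Real.exp (2/M) := by
      have he := Real.add_one_le_exp (2/M)
      calc M + 2 = M * (2/M + 1) := by field_simp; ring
        _ ≤ M * Real.exp (2/M) := mul_le_mul_of_nonneg_left he hMpos.le
    have h2 : (M + 2)^(k+1) ≤ (M * Real.exp (2/M))^(k+1) :=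
      pow_le_pow_left₀ (by linarith) h1 _
    have h3 : (M * Real.exp (2/M))^(k+1) = M^(k+1) * Real.exp (((k:ℝ)+1) * (2/M)) := by
      rw [mul_pow, ← Real.exp_nat_mul]
      push_cast
      ring_nf
    have h4 : ((k:ℝ)+1) * (2/M) ≤ 3 := by
      have hkm : ((k:ℝ)) ≤ M := by
        rw [hM]; exact_mod_cast hk
      have h2M : 2/M ≤ 1 := by
        rw [div_le_one hMpos]; linarith
      have : ((k:ℝ)+1) * (2/M) ≤ (M+1) * (2/M) := by
        apply mul_le_mul_of_nonneg_right (by linarith) (by positivity)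
      calc ((k:ℝ)+1) * (2/M) ≤ (M+1) * (2/M) := this
        _ = 2 + 2/M := by field_simp
        _ ≤ 3 := by linarith
    have h5 : Real.exp (((k:ℝ)+1) * (2/M)) ≤ Real.exp 3 := Real.exp_le_exp.mpr h4
    have h6 : Real.exp 3 ≤ 42 := by
      have he1 := Real.exp_one_lt_d9
      have h3e : Real.exp 3 = (Real.exp 1)^3 := by
        rw [← Real.exp_nat_mul]; norm_num
      rw [h3e]
      have h7 : Real.exp 1 ^ 3 < (2.7182818286:ℝ)^3 :=
        pow_lt_pow_left₀ he1 (Real.exp_pos 1).le (by norm_num)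
      have h8 : (2.7182818286:ℝ)^3 ≤ 42 := by norm_num
      linarith
    have hfin : (M + 2)^(k+1) ≤ 42 * M^(k+1) := by
      calc (M + 2)^(k+1) ≤ M^(k+1) * Real.exp (((k:ℝ)+1) * (2/M)) := by rw [← h3]; exact h2
        _ ≤ M^(k+1) * 42 := by
            apply mul_le_mul_of_nonneg_left (h5.trans h6) (by positivity)
        _ = 42 * M^(k+1) := by ring
    calc (M + 2) * (2 * (M + 2))^k = 2^k * (M + 2)^(k+1) := by rw [mul_pow, pow_succ]; ring
      _ ≤ 2^k * (42 * M^(k+1)) := by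
          apply mul_le_mul_of_nonneg_left hfin (by positivity)
      _ = 21 * (2 * M)^(k+1) := by rw [mul_pow]; ring
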